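/- Let n ≥ 1, let 𝕊_n be the symmetric group on n letters and S ⊆ 𝕊_n an inverse-closed subset. Let (π^α)_{α∈A} be a finite family of pairwise non-unitarily-equivalent irreducible unitary representations of 𝕊_n, of dimensions d_α, such that every irreducible unitary representation of 𝕊_n is unitarily equivalent to some π^α. Let C > 0 and suppose that for each α ∈ A, 1 ≤ i ≤ d_α, and eigenvalue λ of π^α(S), F^{α,λ}_i is a finite family of vectors in E_λ(π^α(S)) which is a tight frame for E_λ(π^α(S)) with frame constant C: ∑_{ψ ∈ F^{α,λ}_i} |⟨v, ψ⟩|² = C·‖v‖² for all v ∈ E_λ(π^α(S)). Then the collection Φ = {Θ̃_{π^α,i,λ}(ψ) : α ∈ A, 1 ≤ i ≤ d_α, λ an eigenvalue of π^α(S), ψ ∈ F^{α,λ}_i} is a tight frame for L²(𝕊_n) with frame constant C: ∑_{φ ∈ Φ} |⟨f, φ⟩|² = C·‖f‖² for all f ∈ L²(𝕊_n). -/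

import Mathlib

open scoped BigOperators

noncomputable section

/-- A unitary representation of a group `G` of dimension `d`: a group homomorphism from `G`
into the group of `d × d` complex unitary matrices. -/
abbrev URep (G : Type*) [Group G] (d : ℕ) : Type _ :=
  G →* Matrix.unitaryGroup (Fin d) ℂ

/-- A unitary representation is irreducible if its dimension is positive and the only
subspaces `W ⊆ ℂ^d` with `π(g)W ⊆ W` for all `g` are `{0}` and `ℂ^d`. -/
def URepIrreducible {G : Type*} [Group G] {d : ℕ} (π : URep G d) : Prop :=
  0 < d ∧ ∀ W : Submodule ℂ (Fin d → ℂ),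
    (∀ g : G, ∀ ξ ∈ W, ((π g : Matrix (Fin d) (Fin d) ℂ)).mulVec ξ ∈ W) → W = ⊥ ∨ W = ⊤

/-- The coefficient function `π_{j,i}(g) = (π(g))_{i,j}`. -/
def coeff {G : Type*} [Group G] {d : ℕ} (π : URep G d) (j i : Fin d) : G → ℂ :=
  fun g => (π g : Matrix (Fin d) (Fin d) ℂ) i j

/-- The subspace `E_{π,i} = span{π_{j,i} : 1 ≤ j ≤ d}` of `L²(G)`. -/
def Esp {G : Type*} [Group G] {d : ℕ} (π : URep G d) (i : Fin d) : Submodule ℂ (G → ℂ) :=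
  Submodule.span ℂ (Set.range fun j : Fin d => coeff π j i)

/-- Unitary equivalence of two unitary representations: the dimensions agree and there is a
unitary matrix `U` with `U⁻¹ π(g) U = σ(g)` for all `g`. -/
def UEquiv {G : Type*} [Group G] {d d' : ℕ} (π : URep G d) (σ : URep G d') : Prop :=
  ∃ h : d = d', ∃ U : Matrix (Fin d') (Fin d') ℂ, U ∈ Matrix.unitaryGroup (Fin d') ℂ ∧
    ∀ g : G, U⁻¹ * (Matrix.reindex (finCongr h) (finCongr h)
        ((π g : Matrix (Fin d) (Fin d) ℂ))) * U = (σ g : Matrix (Fin d') (Fin d') ℂ)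

/-- `π(S) = ∑_{a ∈ S} π(a)`. -/
def repSum {G : Type*} [Group G] {d : ℕ} (π : URep G d) (S : Finset G) :
    Matrix (Fin d) (Fin d) ℂ :=
  ∑ a ∈ S, (π a : Matrix (Fin d) (Fin d) ℂ)

/-- `X` is a `λ`-eigenvector (possibly zero) of `M`: `M X = λ X`. -/
def IsEigvec {d : ℕ} (M : Matrix (Fin d) (Fin d) ℂ) (lam : ℝ) (X : Fin d → ℂ) : Prop :=
  M.mulVec X = (lam : ℂ) • X

/-- `λ` is an eigenvalue of `M`. -/
def IsEigval {d : ℕ} (M : Matrix (Fin d) (Fin d) ℂ) (lam : ℝ) : Prop :=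
  ∃ X : Fin d → ℂ, X ≠ 0 ∧ IsEigvec M lam X

/-- The `λ`-eigenspace `E_λ(M)` as a submodule of `ℂ^d`. -/
def eigSp {d : ℕ} (M : Matrix (Fin d) (Fin d) ℂ) (lam : ℝ) : Submodule ℂ (Fin d → ℂ) :=
  LinearMap.ker (M.mulVecLin - (lam : ℂ) • LinearMap.id)

/-- The inner product `⟨u, v⟩ = ∑ u(x) conj(v(x))`, linear in the first variable
(the convention of the paper). -/
def dotC {X : Type*} [Fintype X] (u v : X → ℂ) : ℂ :=
  ∑ x, u x * (starRingEnd ℂ) (v x)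

/-- The squared norm `‖u‖² = ∑ |u(x)|²`. -/
def norm2 {X : Type*} [Fintype X] (u : X → ℂ) : ℝ :=
  ∑ x, Complex.normSq (u x)

/-- The map `Θ_{π,i} : X ↦ ∑_k X_k π_{k,i}`. -/
def Theta {G : Type*} [Group G] {d : ℕ} (π : URep G d) (i : Fin d)
    (X : Fin d → ℂ) : G → ℂ :=
  fun g => ∑ k, X k * coeff π k i g

/-- The map `Θ_{π,i}` as a linear map. -/
def ThetaL {G : Type*} [Group G] {d : ℕ} (π : URep G d) (i : Fin d) :
    (Fin d → ℂ) →ₗ[ℂ] (G → ℂ) where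
  toFun X := fun g => ∑ k, X k * coeff π k i g
  map_add' X Y := by
    funext g
    simp [add_mul, Finset.sum_add_distrib]
  map_smul' c X := by
    funext g
    simp [Finset.mul_sum, mul_assoc]

/-- The space `Z_{π,i,λ} = {∑_k X_k π_{k,i} : X ∈ E_λ(π(S))}`. -/
def Zset {G : Type*} [Group G] {d : ℕ} (π : URep G d) (i : Fin d) (lam : ℝ) (S : Finset G) :
    Set (G → ℂ) :=
  {f | ∃ X : Fin d → ℂ, IsEigvec (repSum π S) lam X ∧ f = Theta π i X}

/-- The normalized map `Θ̃_{π,i} = √(d/n!) Θ_{π,i}` for the symmetric group `𝕊_n`. -/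
def ThetaT (n : ℕ) {d : ℕ} (π : URep (Equiv.Perm (Fin n)) d) (i : Fin d)
    (X : Fin d → ℂ) : Equiv.Perm (Fin n) → ℂ :=
  fun g => (Real.sqrt (d / n.factorial) : ℂ) * Theta π i X g

/-- `ψ` is a frame for `W` with lower bound `A` and upper bound `B`:
`A‖v‖² ≤ ∑_t |⟨v, ψ_t⟩|² ≤ B‖v‖²` for all `v ∈ W`. -/
def IsFrameOn {X ι : Type*} [Fintype X] [Fintype ι] (ψ : ι → (X → ℂ)) (W : Set (X → ℂ))
    (A B : ℝ) : Prop :=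
  0 < A ∧ A ≤ B ∧ (∀ t, ψ t ∈ W) ∧
    ∀ v ∈ W, A * norm2 v ≤ ∑ t, Complex.normSq (dotC v (ψ t)) ∧
      ∑ t, Complex.normSq (dotC v (ψ t)) ≤ B * norm2 v

/-- `ψ` is a frame for `W` (for some frame bounds `0 < A ≤ B`). -/
def IsFrameIn {X ι : Type*} [Fintype X] [Fintype ι] (ψ : ι → (X → ℂ)) (W : Set (X → ℂ)) :
    Prop :=
  ∃ A B : ℝ, IsFrameOn ψ W A B



/-! ### Auxiliary lemmas -/

section Aux
variable {G : Type*} [Group G] [Fintype G]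

lemma urep_coe_mul {d : ℕ} (π : URep G d) (g h : G) :
    (π (g * h) : Matrix (Fin d) (Fin d) ℂ)
      = (π g : Matrix (Fin d) (Fin d) ℂ) * (π h : Matrix (Fin d) (Fin d) ℂ) := by
  rw [map_mul]; rfl

lemma urep_inv_mul {d : ℕ} (π : URep G d) (g : G) :
    (π g⁻¹ : Matrix (Fin d) (Fin d) ℂ) * (π g : Matrix (Fin d) (Fin d) ℂ) = 1 := by
  rw [← urep_coe_mul, inv_mul_cancel, map_one]; rfl

lemma urep_mul_inv {d : ℕ} (π : URep G d) (g : G) :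
    (π g : Matrix (Fin d) (Fin d) ℂ) * (π g⁻¹ : Matrix (Fin d) (Fin d) ℂ) = 1 := by
  rw [← urep_coe_mul, mul_inv_cancel, map_one]; rfl

lemma urep_inv_coe {d : ℕ} (π : URep G d) (g : G) :
    (π g⁻¹ : Matrix (Fin d) (Fin d) ℂ) = star (π g : Matrix (Fin d) (Fin d) ℂ) := by
  calc (π g⁻¹ : Matrix (Fin d) (Fin d) ℂ)
      = (π g⁻¹ : Matrix (Fin d) (Fin d) ℂ) * ((π g : Matrix (Fin d) (Fin d) ℂ) *
        star (π g : Matrix (Fin d) (Fin d) ℂ)) := by rw [(π g).2.2, mul_one]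
    _ = star (π g : Matrix (Fin d) (Fin d) ℂ) := by rw [← mul_assoc, urep_inv_mul, one_mul]

lemma urep_inv_apply {d : ℕ} (π : URep G d) (g : G) (b j : Fin d) :
    (π g⁻¹ : Matrix (Fin d) (Fin d) ℂ) b j
      = (starRingEnd ℂ) ((π g : Matrix (Fin d) (Fin d) ℂ) j b) := by
  rw [urep_inv_coe, Matrix.star_apply]; rfl

lemma schur_scalar {d : ℕ} (π : URep G d) (hirr : URepIrreducible π)
    (M : Matrix (Fin d) (Fin d) ℂ)
    (hM : ∀ g : G, (π g : Matrix (Fin d) (Fin d) ℂ) * M = M * (π g : Matrix (Fin d) (Fin d) ℂ)) :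
    ∃ c : ℂ, M = c • (1 : Matrix (Fin d) (Fin d) ℂ) := by
  haveI : Nonempty (Fin d) := ⟨⟨0, hirr.1⟩⟩
  obtain ⟨c, hc⟩ := Module.End.exists_eigenvalue (M.mulVecLin)
  refine ⟨c, ?_⟩
  have hinv : ∀ g : G, ∀ ξ ∈ Module.End.eigenspace (M.mulVecLin) c,
      ((π g : Matrix (Fin d) (Fin d) ℂ)).mulVec ξ ∈ Module.End.eigenspace (M.mulVecLin) c := by
    intro g ξ hξ
    rw [Module.End.mem_eigenspace_iff] at hξ ⊢
    have h2 : M.mulVec ((π g : Matrix (Fin d) (Fin d) ℂ).mulVec ξ)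
        = (π g : Matrix (Fin d) (Fin d) ℂ).mulVec (M.mulVec ξ) := by
      rw [Matrix.mulVec_mulVec, Matrix.mulVec_mulVec, ← hM g]
    simp only [Matrix.mulVecLin_apply] at hξ ⊢
    rw [h2, hξ, Matrix.mulVec_smul]
  have hW : Module.End.eigenspace (M.mulVecLin) c = ⊤ := by
    rcases hirr.2 _ hinv with h | h
    · exact absurd h hc
    · exact h
  have hall : ∀ x : Fin d → ℂ, M.mulVec x = c • x := by
    intro x
    have : x ∈ Module.End.eigenspace (M.mulVecLin) c := hW ▸ Submodule.mem_top
    simpa [Module.End.mem_eigenspace_iff] using this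
  ext i j
  have := congrFun (hall (Pi.single j 1)) i
  simpa [Matrix.mulVec_single, Matrix.one_apply, Pi.single_apply] using this

/-- Averaged operator commutes (same representation). -/
lemma avg_comm {d : ℕ} (π : URep G d) (E : Matrix (Fin d) (Fin d) ℂ) (h : G) :
    (π h : Matrix (Fin d) (Fin d) ℂ) *
      (∑ g : G, (π g : Matrix (Fin d) (Fin d) ℂ) * E * (π g⁻¹ : Matrix (Fin d) (Fin d) ℂ))
    = (∑ g : G, (π g : Matrix (Fin d) (Fin d) ℂ) * E * (π g⁻¹ : Matrix (Fin d) (Fin d) ℂ)) *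
      (π h : Matrix (Fin d) (Fin d) ℂ) := by
  rw [Finset.mul_sum, Finset.sum_mul]
  apply Fintype.sum_equiv (Equiv.mulLeft h)
  intro g
  simp only [Equiv.coe_mulLeft]
  have e2 : (π (h * g)⁻¹ : Matrix (Fin d) (Fin d) ℂ) * (π h : Matrix (Fin d) (Fin d) ℂ)
      = (π g⁻¹ : Matrix (Fin d) (Fin d) ℂ) := by
    rw [mul_inv_rev, urep_coe_mul, mul_assoc, urep_inv_mul, mul_one]
  show _ = (π (h * g) : Matrix (Fin d) (Fin d) ℂ) * E * _ * _
  rw [mul_assoc _ _ ((π h : Matrix (Fin d) (Fin d) ℂ)), e2, urep_coe_mul]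
  simp [mul_assoc]

lemma sandwich_entry {d : ℕ} (π : URep G d) (a b : Fin d) (i j : Fin d) (g : G) :
    ((π g : Matrix (Fin d) (Fin d) ℂ) * Matrix.single a b (1:ℂ) *
      (π g⁻¹ : Matrix (Fin d) (Fin d) ℂ)) i j
    = (π g : Matrix (Fin d) (Fin d) ℂ) i a *
        (starRingEnd ℂ) ((π g : Matrix (Fin d) (Fin d) ℂ) j b) := by
  rw [← urep_inv_apply]
  simp [Matrix.mul_apply, Matrix.single, ite_and, mul_ite, ite_mul, zero_mul, mul_zero,
    Finset.sum_ite_eq, Finset.sum_ite_eq']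

/-- Schur orthogonality, same irreducible representation. -/
lemma orth_same {d : ℕ} (π : URep G d) (hirr : URepIrreducible π) (i a j b : Fin d) :
    ∑ g : G, (π g : Matrix (Fin d) (Fin d) ℂ) i a *
      (starRingEnd ℂ) ((π g : Matrix (Fin d) (Fin d) ℂ) j b)
    = if a = b ∧ i = j then ((Fintype.card G : ℂ) / d) else 0 := by
  set E := Matrix.single a b (1:ℂ) with hE
  set T := ∑ g : G, (π g : Matrix (Fin d) (Fin d) ℂ) * E * (π g⁻¹ : Matrix (Fin d) (Fin d) ℂ)
    with hT
  obtain ⟨c, hc⟩ := schur_scalar π hirr T (fun h => avg_comm π E h)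
  have htrE : E.trace = if a = b then 1 else 0 := by
    by_cases h : a = b
    · subst h; simp [hE, Matrix.trace_single_eq_same]
    · rw [if_neg h, hE, Matrix.trace_single_eq_of_ne (h := h)]
  have htr : T.trace = (Fintype.card G : ℂ) * E.trace := by
    rw [hT, Matrix.trace_sum]
    have : ∀ g : G, ((π g : Matrix (Fin d) (Fin d) ℂ) * E *
        (π g⁻¹ : Matrix (Fin d) (Fin d) ℂ)).trace = E.trace := by
      intro g
      rw [Matrix.trace_mul_cycle, urep_inv_mul, one_mul]
    rw [Finset.sum_congr rfl (fun g _ => this g)]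
    simp [Finset.card_univ]
  have hcval : c = (Fintype.card G : ℂ) * E.trace / d := by
    have := congrArg Matrix.trace hc
    rw [htr] at this
    have htr1 : ((c • (1 : Matrix (Fin d) (Fin d) ℂ)).trace) = c * d := by
      simp [Matrix.trace_smul, Matrix.trace_one, mul_comm]
    rw [htr1] at this
    have hd : (d : ℂ) ≠ 0 := Nat.cast_ne_zero.mpr hirr.1.ne'
    rw [eq_div_iff hd]
    exact this.symm
  have hentry := congrFun (congrFun hc i) j
  have hTij : T i j = ∑ g : G, (π g : Matrix (Fin d) (Fin d) ℂ) i a *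
      (starRingEnd ℂ) ((π g : Matrix (Fin d) (Fin d) ℂ) j b) := by
    rw [hT]
    rw [Matrix.sum_apply]
    exact Finset.sum_congr rfl fun g _ => sandwich_entry π a b i j g
  rw [hTij] at hentry
  rw [hentry, hcval, htrE]
  by_cases hab : a = b <;> by_cases hij : i = j <;>
    simp [hab, hij, Matrix.one_apply, Matrix.smul_apply]

end Aux

section Aux2
variable {G : Type*} [Group G] [Fintype G]

/-- Averaged operator intertwines. -/
lemma avg_intertwine {d e : ℕ} (π : URep G d) (σ : URep G e)
    (E : Matrix (Fin d) (Fin e) ℂ) (h : G) :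
    (π h : Matrix (Fin d) (Fin d) ℂ) *
      (∑ g : G, (π g : Matrix (Fin d) (Fin d) ℂ) * E * (σ g⁻¹ : Matrix (Fin e) (Fin e) ℂ))
    = (∑ g : G, (π g : Matrix (Fin d) (Fin d) ℂ) * E * (σ g⁻¹ : Matrix (Fin e) (Fin e) ℂ)) *
      (σ h : Matrix (Fin e) (Fin e) ℂ) := by
  rw [Matrix.mul_sum, Matrix.sum_mul]
  apply Fintype.sum_equiv (Equiv.mulLeft h)
  intro g
  simp only [Equiv.coe_mulLeft]
  have e2 : (σ (h * g)⁻¹ : Matrix (Fin e) (Fin e) ℂ) * (σ h : Matrix (Fin e) (Fin e) ℂ)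
      = (σ g⁻¹ : Matrix (Fin e) (Fin e) ℂ) := by
    rw [mul_inv_rev, urep_coe_mul, mul_assoc, urep_inv_mul, mul_one]
  show _ = (π (h * g) : Matrix (Fin d) (Fin d) ℂ) * E * _ * _
  rw [Matrix.mul_assoc _ _ ((σ h : Matrix (Fin e) (Fin e) ℂ)), e2, urep_coe_mul]
  simp [Matrix.mul_assoc]

lemma sandwich_entry2 {d e : ℕ} (π : URep G d) (σ : URep G e)
    (a : Fin d) (b : Fin e) (i : Fin d) (j : Fin e) (g : G) :
    ((π g : Matrix (Fin d) (Fin d) ℂ) * Matrix.single a b (1:ℂ) *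
      (σ g⁻¹ : Matrix (Fin e) (Fin e) ℂ)) i j
    = (π g : Matrix (Fin d) (Fin d) ℂ) i a *
        (starRingEnd ℂ) ((σ g : Matrix (Fin e) (Fin e) ℂ) j b) := by
  rw [← urep_inv_apply]
  simp [Matrix.mul_apply, Matrix.single, ite_and, mul_ite, ite_mul, zero_mul, mul_zero,
    Finset.sum_ite_eq, Finset.sum_ite_eq']

lemma uequiv_of_intertwiner {d e : ℕ} (π : URep G d) (σ : URep G e)
    (hπ : URepIrreducible π) (hσ : URepIrreducible σ)
    (T : Matrix (Fin d) (Fin e) ℂ)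
    (hT : ∀ g : G, (π g : Matrix (Fin d) (Fin d) ℂ) * T = T * (σ g : Matrix (Fin e) (Fin e) ℂ))
    (hT0 : T ≠ 0) : UEquiv π σ := by
  have hT0' : ∃ y : Fin e → ℂ, T.mulVec y ≠ 0 := by
    by_contra hcon
    push_neg at hcon
    apply hT0
    ext i j
    have := congrFun (hcon (Pi.single j 1)) i
    simpa [Matrix.mulVec_single] using this
  -- kernel is trivial
  have hkerinv : ∀ g : G, ∀ ξ ∈ LinearMap.ker T.mulVecLin,
      ((σ g : Matrix (Fin e) (Fin e) ℂ)).mulVec ξ ∈ LinearMap.ker T.mulVecLin := by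
    intro g ξ hξ
    simp only [LinearMap.mem_ker, Matrix.mulVecLin_apply] at hξ ⊢
    rw [Matrix.mulVec_mulVec, ← hT g, ← Matrix.mulVec_mulVec, hξ, Matrix.mulVec_zero]
  have hker : LinearMap.ker T.mulVecLin = ⊥ := by
    rcases hσ.2 _ hkerinv with h | h
    · exact h
    · exfalso
      obtain ⟨y, hy⟩ := hT0'
      exact hy (by simpa [Matrix.mulVecLin_apply] using (h ▸ Submodule.mem_top :
        y ∈ LinearMap.ker T.mulVecLin))
  -- range is everything
  have hrinv : ∀ g : G, ∀ ξ ∈ LinearMap.range T.mulVecLin,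
      ((π g : Matrix (Fin d) (Fin d) ℂ)).mulVec ξ ∈ LinearMap.range T.mulVecLin := by
    rintro g ξ ⟨y, rfl⟩
    exact ⟨(σ g : Matrix (Fin e) (Fin e) ℂ).mulVec y, by
      simp only [Matrix.mulVecLin_apply, Matrix.mulVec_mulVec, ← hT g]⟩
  have hrange : LinearMap.range T.mulVecLin = ⊤ := by
    rcases hπ.2 _ hrinv with h | h
    · exfalso
      obtain ⟨y, hy⟩ := hT0'
      exact hy (by simpa using (h ▸ LinearMap.mem_range_self T.mulVecLin y :
        T.mulVecLin y ∈ (⊥ : Submodule ℂ (Fin d → ℂ))))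
    · exact h
  have hbij : Function.Bijective T.mulVecLin :=
    ⟨LinearMap.ker_eq_bot.mp hker, LinearMap.range_eq_top.mp hrange⟩
  have hde : d = e := by
    have := (LinearEquiv.ofBijective T.mulVecLin hbij).finrank_eq
    simpa [Module.finrank_fin_fun] using this.symm
  -- T† intertwines the other way
  have hTstar : ∀ g : G, T.conjTranspose * (π g : Matrix (Fin d) (Fin d) ℂ)
      = (σ g : Matrix (Fin e) (Fin e) ℂ) * T.conjTranspose := by
    intro g
    have h1 := congrArg Matrix.conjTranspose (hT g⁻¹)
    rw [Matrix.conjTranspose_mul, Matrix.conjTranspose_mul] at h1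
    have h2 : (π g⁻¹ : Matrix (Fin d) (Fin d) ℂ).conjTranspose
        = (π g : Matrix (Fin d) (Fin d) ℂ) := by
      rw [← Matrix.star_eq_conjTranspose, urep_inv_coe, star_star]
    have h3 : (σ g⁻¹ : Matrix (Fin e) (Fin e) ℂ).conjTranspose
        = (σ g : Matrix (Fin e) (Fin e) ℂ) := by
      rw [← Matrix.star_eq_conjTranspose, urep_inv_coe, star_star]
    rw [h2, h3] at h1
    exact h1
  -- T† T is scalar
  have hcomm : ∀ g : G, (σ g : Matrix (Fin e) (Fin e) ℂ) * (T.conjTranspose * T)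
      = (T.conjTranspose * T) * (σ g : Matrix (Fin e) (Fin e) ℂ) := by
    intro g
    calc (σ g : Matrix (Fin e) (Fin e) ℂ) * (T.conjTranspose * T) = ((σ g : Matrix (Fin e) (Fin e) ℂ) * T.conjTranspose) * T := by
          rw [Matrix.mul_assoc]
      _ = (T.conjTranspose * (π g : Matrix (Fin d) (Fin d) ℂ)) * T := by rw [hTstar g]
      _ = T.conjTranspose * ((π g : Matrix (Fin d) (Fin d) ℂ) * T) := by rw [Matrix.mul_assoc]
      _ = T.conjTranspose * (T * (σ g : Matrix (Fin e) (Fin e) ℂ)) := by rw [hT g]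
      _ = (T.conjTranspose * T) * (σ g : Matrix (Fin e) (Fin e) ℂ) := by rw [Matrix.mul_assoc]
  obtain ⟨c, hc⟩ := schur_scalar σ hσ (T.conjTranspose * T) hcomm
  -- the scalar is real and positive
  set R : ℝ := ∑ i : Fin d, ∑ j : Fin e, Complex.normSq (T i j) with hRdef
  have hdiag : ∀ j : Fin e, (T.conjTranspose * T) j j
      = ((∑ i : Fin d, Complex.normSq (T i j) : ℝ) : ℂ) := by
    intro j
    rw [Matrix.mul_apply]
    push_cast
    apply Finset.sum_congr rfl
    intro i _
    rw [Matrix.conjTranspose_apply, Complex.star_def, ← Complex.normSq_eq_conj_mul_self]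
  have htrP : (T.conjTranspose * T).trace = (R : ℂ) := by
    rw [Matrix.trace]
    simp only [Matrix.diag_apply, hdiag]
    rw [hRdef]
    push_cast
    rw [Finset.sum_comm]
  have hRpos : 0 < R := by
    rcases lt_or_eq_of_le (Finset.sum_nonneg fun i (_ : i ∈ Finset.univ) =>
      Finset.sum_nonneg fun j (_ : j ∈ Finset.univ) => Complex.normSq_nonneg (T i j)) with h | h
    · exact h
    · exfalso
      apply hT0
      ext i j
      have h2 := (Finset.sum_eq_zero_iff_of_nonneg fun i (_ : i ∈ Finset.univ) =>
        Finset.sum_nonneg fun j (_ : j ∈ Finset.univ) =>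
          Complex.normSq_nonneg (T i j)).mp h.symm i (by simp)
      have h3 := (Finset.sum_eq_zero_iff_of_nonneg fun j (_ : j ∈ Finset.univ) =>
        Complex.normSq_nonneg (T i j)).mp h2 j (by simp)
      simpa using Complex.normSq_eq_zero.mp h3
  have he : (e : ℂ) ≠ 0 := Nat.cast_ne_zero.mpr hσ.1.ne'
  have hcval : c = ((R / e : ℝ) : ℂ) := by
    have h1 := congrArg Matrix.trace hc
    rw [htrP] at h1
    have h2 : ((c • (1 : Matrix (Fin e) (Fin e) ℂ)).trace) = c * e := by
      simp [Matrix.trace_smul, Matrix.trace_one, mul_comm]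
    rw [h2] at h1
    push_cast
    rw [eq_div_iff he]
    exact h1.symm
  -- build the unitary
  set s : ℝ := Real.sqrt (R / e) with hsdef
  have hepos : (0:ℝ) < e := by exact_mod_cast hσ.1
  have hsq : s * s = R / e := Real.mul_self_sqrt (le_of_lt (div_pos hRpos hepos))
  have hspos : 0 < s := Real.sqrt_pos.mpr (div_pos hRpos hepos)
  set κ : Fin d ≃ Fin e := finCongr hde with hκ
  set U : Matrix (Fin e) (Fin e) ℂ := ((s⁻¹ : ℝ) : ℂ) • T.submatrix κ.symm id with hUdef
  have hscal : ((s⁻¹ : ℝ) : ℂ) * (((s⁻¹ : ℝ) : ℂ) * ((R / e : ℝ) : ℂ)) = 1 := by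
    have hr : (s⁻¹ * (s⁻¹ * (R / e)) : ℝ) = 1 := by
      rw [← hsq]
      field_simp
    calc ((s⁻¹ : ℝ) : ℂ) * (((s⁻¹ : ℝ) : ℂ) * ((R / e : ℝ) : ℂ))
        = ((s⁻¹ * (s⁻¹ * (R / e)) : ℝ) : ℂ) := by push_cast; ring
      _ = 1 := by rw [hr]; norm_num
  have hUU : U.conjTranspose * U = 1 := by
    rw [hUdef, Matrix.conjTranspose_smul, Matrix.conjTranspose_submatrix]
    rw [Matrix.smul_mul, Matrix.mul_smul, smul_smul]
    have hsub : T.conjTranspose.submatrix id ⇑κ.symm * T.submatrix (⇑κ.symm) id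
        = (T.conjTranspose * T).submatrix id id :=
      Matrix.submatrix_mul_equiv T.conjTranspose T id κ.symm id
    rw [hsub, Matrix.submatrix_id_id, hc, hcval, smul_smul]
    rw [Complex.star_def, Complex.conj_ofReal]
    rw [mul_assoc, hscal, one_smul]
  have hU : U ∈ Matrix.unitaryGroup (Fin e) ℂ := by
    constructor
    · rw [← Matrix.star_eq_conjTranspose] at hUU
      exact hUU
    · rw [Matrix.star_eq_conjTranspose]
      exact mul_eq_one_comm.mp hUU
  have hUinv : U⁻¹ = U.conjTranspose := by
    apply Matrix.inv_eq_left_inv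
    exact hUU
  have hUinvU : U⁻¹ * U = 1 := by rw [hUinv]; exact hUU
  refine ⟨hde, U, hU, ?_⟩
  intro g
  have hkey : (Matrix.reindex (finCongr hde) (finCongr hde)
      ((π g : Matrix (Fin d) (Fin d) ℂ))) * U = U * (σ g : Matrix (Fin e) (Fin e) ℂ) := by
    rw [hUdef, Matrix.mul_smul, Matrix.smul_mul]
    congr 1
    rw [Matrix.reindex_apply]
    have h1 : (π g : Matrix (Fin d) (Fin d) ℂ).submatrix ⇑κ.symm ⇑κ.symm
          * T.submatrix (⇑κ.symm) id
        = ((π g : Matrix (Fin d) (Fin d) ℂ) * T).submatrix ⇑κ.symm id :=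
      Matrix.submatrix_mul_equiv _ _ _ κ.symm _
    have h2 : T.submatrix (⇑κ.symm) id * (σ g : Matrix (Fin e) (Fin e) ℂ)
        = (T * (σ g : Matrix (Fin e) (Fin e) ℂ)).submatrix ⇑κ.symm id := by
      have := Matrix.submatrix_mul_equiv T (σ g : Matrix (Fin e) (Fin e) ℂ)
        (⇑κ.symm) (Equiv.refl (Fin e)) id
      simpa using this
    show (π g : Matrix (Fin d) (Fin d) ℂ).submatrix ⇑κ.symm ⇑κ.symm
        * T.submatrix (⇑κ.symm) id = _
    rw [h1, hT g, ← h2]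
  calc U⁻¹ * (Matrix.reindex (finCongr hde) (finCongr hde)
        ((π g : Matrix (Fin d) (Fin d) ℂ))) * U
      = U⁻¹ * ((Matrix.reindex (finCongr hde) (finCongr hde)
        ((π g : Matrix (Fin d) (Fin d) ℂ))) * U) := by rw [Matrix.mul_assoc]
    _ = U⁻¹ * (U * (σ g : Matrix (Fin e) (Fin e) ℂ)) := by rw [hkey]
    _ = (U⁻¹ * U) * (σ g : Matrix (Fin e) (Fin e) ℂ) := by rw [Matrix.mul_assoc]
    _ = (σ g : Matrix (Fin e) (Fin e) ℂ) := by rw [hUinvU, Matrix.one_mul]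

/-- Schur orthogonality, inequivalent irreducible representations. -/
lemma orth_cross {d e : ℕ} (π : URep G d) (σ : URep G e)
    (hπ : URepIrreducible π) (hσ : URepIrreducible σ) (hne : ¬ UEquiv π σ)
    (i a : Fin d) (j b : Fin e) :
    ∑ g : G, (π g : Matrix (Fin d) (Fin d) ℂ) i a *
      (starRingEnd ℂ) ((σ g : Matrix (Fin e) (Fin e) ℂ) j b) = 0 := by
  set E := Matrix.single a b (1:ℂ) with hE
  set T := ∑ g : G, (π g : Matrix (Fin d) (Fin d) ℂ) * E * (σ g⁻¹ : Matrix (Fin e) (Fin e) ℂ)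
    with hT
  have hT0 : T = 0 := by
    by_contra h0
    exact hne (uequiv_of_intertwiner π σ hπ hσ T (fun h => avg_intertwine π σ E h) h0)
  have hTij : T i j = ∑ g : G, (π g : Matrix (Fin d) (Fin d) ℂ) i a *
      (starRingEnd ℂ) ((σ g : Matrix (Fin e) (Fin e) ℂ) j b) := by
    rw [hT, Matrix.sum_apply]
    exact Finset.sum_congr rfl fun g _ => sandwich_entry2 π σ a b i j g
  rw [← hTij, hT0]
  rfl

end Aux2

section Bridge

/-- Identification of plain functions with Euclidean space. -/
def toE {X : Type*} [Fintype X] : (X → ℂ) ≃ₗ[ℂ] EuclideanSpace ℂ X :=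
  (WithLp.linearEquiv 2 ℂ (X → ℂ)).symm

lemma inner_toE {X : Type*} [Fintype X] (u v : X → ℂ) :
    (inner ℂ (toE u) (toE v)) = dotC v u := by
  simp only [PiLp.inner_apply, RCLike.inner_apply, dotC]
  apply Finset.sum_congr rfl
  intro x _
  show v x * (starRingEnd ℂ) (u x) = v x * (starRingEnd ℂ) (u x)
  ring

lemma norm_toE {X : Type*} [Fintype X] (u : X → ℂ) :
    ‖toE u‖ ^ 2 = norm2 u := by
  rw [EuclideanSpace.norm_eq, Real.sq_sqrt (Finset.sum_nonneg fun x _ => sq_nonneg _)]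
  apply Finset.sum_congr rfl
  intro x _
  show ‖u x‖ ^ 2 = _
  exact Complex.sq_norm _

variable {G : Type*} [Group G] [Fintype G]

/-- Right translation on functions. -/
def trL (h : G) : (G → ℂ) →ₗ[ℂ] (G → ℂ) where
  toFun f := fun g => f (g * h)
  map_add' f₁ f₂ := rfl
  map_smul' c f := rfl

/-- Right regular representation on Euclidean space. -/
def RlinE (h : G) : EuclideanSpace ℂ G →ₗ[ℂ] EuclideanSpace ℂ G :=
  toE.toLinearMap ∘ₗ trL h ∘ₗ toE.symm.toLinearMap

lemma RlinE_apply (h : G) (u : G → ℂ) : RlinE h (toE u) = toE (trL h u) := by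
  simp [RlinE]

lemma RlinE_comp (h₁ h₂ : G) (x : EuclideanSpace ℂ G) :
    RlinE h₁ (RlinE h₂ x) = RlinE (h₁ * h₂) x := by
  obtain ⟨u, rfl⟩ := toE.surjective x
  rw [RlinE_apply, RlinE_apply, RlinE_apply]
  congr 1
  funext g
  show u (g * h₁ * h₂) = u (g * (h₁ * h₂))
  rw [mul_assoc]

lemma RlinE_one (x : EuclideanSpace ℂ G) : RlinE 1 x = x := by
  obtain ⟨u, rfl⟩ := toE.surjective x
  rw [RlinE_apply]
  congr 1
  funext g
  show u (g * 1) = u g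
  rw [mul_one]

lemma RlinE_inner (h : G) (x y : EuclideanSpace ℂ G) :
    (inner ℂ (RlinE h x) (RlinE h y)) = inner ℂ x y := by
  obtain ⟨u, rfl⟩ := toE.surjective x
  obtain ⟨v, rfl⟩ := toE.surjective y
  rw [RlinE_apply, RlinE_apply, inner_toE, inner_toE]
  unfold dotC
  apply Fintype.sum_equiv (Equiv.mulRight h)
  intro g
  rfl

lemma RlinE_inner_left (h : G) (x y : EuclideanSpace ℂ G) :
    (inner ℂ x (RlinE h y)) = inner ℂ (RlinE h⁻¹ x) y := by
  conv_rhs => rw [← RlinE_inner h (RlinE h⁻¹ x) y]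
  rw [RlinE_comp, mul_inv_cancel, RlinE_one]

end Bridge

section Complete
variable {G : Type*} [Group G] [Fintype G] [DecidableEq G]
variable {A : Type*} [Fintype A] {d : A → ℕ}

set_option maxHeartbeats 1000000 in
lemma coeff_span_top (π : ∀ α : A, URep G (d α))
    (hirr : ∀ α, URepIrreducible (π α))
    (hcomplete : ∀ (d' : ℕ) (σ : URep G d'), URepIrreducible σ → ∃ α, UEquiv σ (π α)) :
    Submodule.span ℂ (Set.range fun p : Σ α : A, Fin (d α) × Fin (d α) =>
      toE (coeff (π p.1) p.2.1 p.2.2)) = ⊤ := by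
  classical
  set fam : (Σ α : A, Fin (d α) × Fin (d α)) → EuclideanSpace ℂ G :=
    fun p => toE (coeff (π p.1) p.2.1 p.2.2) with hfam
  set V : Submodule ℂ (EuclideanSpace ℂ G) := Submodule.span ℂ (Set.range fam) with hV
  show V = ⊤
  -- V is invariant under right translation
  have hfam_inv : ∀ (h : G) (p : Σ α : A, Fin (d α) × Fin (d α)), RlinE h (fam p) ∈ V := by
    rintro h ⟨α, k, i⟩
    have h1 : trL h (coeff (π α) k i)
        = ∑ l : Fin (d α), ((π α h : Matrix (Fin (d α)) (Fin (d α)) ℂ) l k) •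
            coeff (π α) l i := by
      funext g
      show coeff (π α) k i (g * h) = _
      rw [Finset.sum_apply]
      unfold coeff
      rw [urep_coe_mul, Matrix.mul_apply]
      apply Finset.sum_congr rfl
      intro l _
      rw [Pi.smul_apply, smul_eq_mul]
      ring
    show RlinE h (toE (coeff (π α) k i)) ∈ V
    rw [RlinE_apply, h1, map_sum]
    apply Submodule.sum_mem
    intro l _
    rw [map_smul]
    exact Submodule.smul_mem _ _ (Submodule.subset_span ⟨⟨α, l, i⟩, rfl⟩)
  have hVinv : ∀ (h : G), ∀ x ∈ V, RlinE h x ∈ V := by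
    intro h x hx
    refine Submodule.span_induction ?_ ?_ ?_ ?_ hx
    · rintro x ⟨p, rfl⟩; exact hfam_inv h p
    · rw [map_zero]; exact Submodule.zero_mem _
    · intro x y _ _ hx hy; rw [map_add]; exact Submodule.add_mem _ hx hy
    · intro a x _ hx; rw [map_smul]; exact Submodule.smul_mem _ a hx
  have hVperp_inv : ∀ (h : G), ∀ x ∈ Vᗮ, RlinE h x ∈ Vᗮ := by
    intro h x hx
    rw [Submodule.mem_orthogonal] at hx ⊢
    intro u hu
    rw [RlinE_inner_left]
    exact hx _ (hVinv h⁻¹ u hu)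
  by_contra hne
  have hperp_ne : Vᗮ ≠ ⊥ := fun hb => hne (Submodule.orthogonal_eq_bot_iff.mp hb)
  -- find a minimal invariant subspace of Vᗮ
  set P : ℕ → Prop := fun k => ∃ W : Submodule ℂ (EuclideanSpace ℂ G),
    (W ≤ Vᗮ ∧ W ≠ ⊥ ∧ (∀ h : G, ∀ x ∈ W, RlinE h x ∈ W)) ∧ Module.finrank ℂ W = k with hP
  have hex : ∃ k, P k := ⟨_, Vᗮ, ⟨le_refl _, hperp_ne, hVperp_inv⟩, rfl⟩
  obtain ⟨W, ⟨hWle, hWne, hWinv⟩, hWrank⟩ := Nat.find_spec hex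
  have hmin : ∀ (W' : Submodule ℂ (EuclideanSpace ℂ G)), W' ≤ Vᗮ → W' ≠ ⊥ →
      (∀ h : G, ∀ x ∈ W', RlinE h x ∈ W') → Module.finrank ℂ W ≤ Module.finrank ℂ W' := by
    intro W' h1 h2 h3
    rw [hWrank]
    exact Nat.find_min' hex ⟨W', ⟨h1, h2, h3⟩, rfl⟩
  haveI : Nontrivial ↥W := Submodule.nontrivial_iff_ne_bot.mpr hWne
  have hmpos : 0 < Module.finrank ℂ W := Module.finrank_pos
  set m := Module.finrank ℂ ↥W with hm
  set b : OrthonormalBasis (Fin m) ℂ ↥W := stdOrthonormalBasis ℂ ↥W with hb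
  -- restricted right regular representation
  set Rres : G → (↥W →ₗ[ℂ] ↥W) := fun h => (RlinE h).restrict (hWinv h) with hRres
  have hRres_coe : ∀ (h : G) (x : ↥W), (Rres h x : EuclideanSpace ℂ G) = RlinE h ↑x :=
    fun h x => rfl
  have hRres_comp : ∀ (h₁ h₂ : G) (x : ↥W), Rres h₁ (Rres h₂ x) = Rres (h₁ * h₂) x :=
    fun h₁ h₂ x => Subtype.ext (by rw [hRres_coe, hRres_coe, hRres_coe]; exact RlinE_comp _ _ _)
  have hRres_one : ∀ x : ↥W, Rres 1 x = x :=
    fun x => Subtype.ext (by rw [hRres_coe]; exact RlinE_one _)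
  have hRres_surj : ∀ h : G, Function.Surjective (Rres h) := by
    intro h y
    exact ⟨Rres h⁻¹ y, by rw [hRres_comp, mul_inv_cancel, hRres_one]⟩
  set σm : G → Matrix (Fin m) (Fin m) ℂ :=
    fun h => LinearMap.toMatrix b.toBasis b.toBasis (Rres h) with hσm
  have hσmul : ∀ h₁ h₂ : G, σm (h₁ * h₂) = σm h₁ * σm h₂ := by
    intro h₁ h₂
    rw [hσm]
    have : Rres (h₁ * h₂) = (Rres h₁) ∘ₗ (Rres h₂) := by
      apply LinearMap.ext; intro x; exact (hRres_comp h₁ h₂ x).symm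
    simp only [this]
    rw [LinearMap.toMatrix_comp b.toBasis b.toBasis b.toBasis]
  have hσone : σm 1 = 1 := by
    rw [hσm]
    have : Rres 1 = LinearMap.id := by
      apply LinearMap.ext; intro x; simp only [LinearMap.id_apply]; exact hRres_one x
    simp only [this]
    exact LinearMap.toMatrix_id b.toBasis
  -- unitarity
  have hb'on : ∀ h : G, Orthonormal ℂ (fun j => Rres h (b j)) := by
    intro h
    rw [orthonormal_iff_ite]
    intro i j
    rw [Submodule.coe_inner, hRres_coe, hRres_coe, RlinE_inner]
    rw [← Submodule.coe_inner]
    exact orthonormal_iff_ite.mp b.orthonormal i j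
  have hb'span : ∀ h : G, ⊤ ≤ Submodule.span ℂ (Set.range fun j => Rres h (b j)) := by
    intro h
    have h1 : (Set.range fun j => Rres h (b j)) = Rres h '' Set.range ⇑b := by
      rw [← Set.range_comp]; rfl
    rw [h1, ← Submodule.map_span]
    have h2 : Submodule.span ℂ (Set.range ⇑b) = ⊤ := by
      rw [← b.coe_toBasis]; exact b.toBasis.span_eq
    rw [h2, Submodule.map_top, LinearMap.range_eq_top.mpr (hRres_surj h)]
  have hσunit : ∀ h : G, σm h ∈ Matrix.unitaryGroup (Fin m) ℂ := by
    intro h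
    have heq : σm h = b.toBasis.toMatrix ⇑(OrthonormalBasis.mk (hb'on h) (hb'span h)) := by
      ext k j
      show (LinearMap.toMatrix b.toBasis b.toBasis) (Rres h) k j = _
      rw [LinearMap.toMatrix_apply, Module.Basis.toMatrix_apply, OrthonormalBasis.coe_mk,
        OrthonormalBasis.coe_toBasis]
    rw [heq]
    exact OrthonormalBasis.toMatrix_orthonormalBasis_mem_unitary b _
  set σ : URep G m :=
    { toFun := fun h => ⟨σm h, hσunit h⟩
      map_one' := Subtype.ext hσone
      map_mul' := fun h₁ h₂ => Subtype.ext (hσmul h₁ h₂) } with hσ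
  have hσcoe : ∀ h : G, (σ h : Matrix (Fin m) (Fin m) ℂ) = σm h := fun h => rfl
  -- irreducibility of σ
  set φ : (Fin m → ℂ) ≃ₗ[ℂ] ↥W := b.toBasis.equivFun.symm with hφ
  have hkey : ∀ (h : G) (X : Fin m → ℂ), Rres h (φ X) = φ ((σm h).mulVec X) := by
    intro h X
    apply b.toBasis.equivFun.injective
    rw [LinearEquiv.apply_symm_apply]
    have h1 : b.toBasis.equivFun (Rres h (φ X)) = ⇑(b.toBasis.repr (Rres h (φ X))) := by
      funext k; rw [Module.Basis.equivFun_apply]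
    have h2 : (σm h).mulVec ⇑(b.toBasis.repr (φ X)) = ⇑(b.toBasis.repr (Rres h (φ X))) :=
      LinearMap.toMatrix_mulVec_repr b.toBasis b.toBasis (Rres h) (φ X)
    rw [h1, ← h2]
    congr 1
    funext k
    rw [← Module.Basis.equivFun_apply, LinearEquiv.apply_symm_apply]
  have hσirr : URepIrreducible σ := by
    refine ⟨hmpos, ?_⟩
    intro W' hW'
    set Wsub : Submodule ℂ (EuclideanSpace ℂ G) :=
      Submodule.map (W.subtype ∘ₗ φ.toLinearMap) W' with hWsub
    have hWsub_le : Wsub ≤ W := by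
      rintro x ⟨X, _, rfl⟩
      exact (φ X).2
    have hWsub_inv : ∀ h : G, ∀ x ∈ Wsub, RlinE h x ∈ Wsub := by
      rintro h x ⟨X, hX, rfl⟩
      refine ⟨(σm h).mulVec X, hW' h X hX, ?_⟩
      show (↑(φ ((σm h).mulVec X)) : EuclideanSpace ℂ G) = RlinE h ↑(φ X)
      rw [← hkey, ← hRres_coe]
    by_cases hW'bot : W' = ⊥
    · left; exact hW'bot
    · right
      have hWsub_ne : Wsub ≠ ⊥ := by
        obtain ⟨X, hX, hX0⟩ := (Submodule.ne_bot_iff W').mp hW'bot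
        refine (Submodule.ne_bot_iff Wsub).mpr ⟨↑(φ X), ⟨X, hX, rfl⟩, ?_⟩
        intro hc
        exact hX0 (φ.injective (by
          apply Subtype.ext
          simpa using hc))
      have hle : Module.finrank ℂ W ≤ Module.finrank ℂ Wsub :=
        hmin Wsub (le_trans hWsub_le hWle) hWsub_ne hWsub_inv
      have hWeq : Wsub = W := Submodule.eq_of_le_of_finrank_le hWsub_le hle
      rw [Submodule.eq_top_iff']
      intro X
      have : (↑(φ X) : EuclideanSpace ℂ G) ∈ Wsub := hWeq.symm ▸ (φ X).2
      obtain ⟨X', hX', hcoe⟩ := this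
      have : X' = X := φ.injective (Subtype.ext hcoe)
      exact this ▸ hX'
  -- σ is equivalent to some π α
  obtain ⟨α, hmeq, U, hUmem, hUeq⟩ := hcomplete m σ hσirr
  have hUinv : U⁻¹ = star U := Matrix.inv_eq_left_inv hUmem.1
  have hUl : U⁻¹ * U = 1 := by rw [hUinv]; exact hUmem.1
  have hUr : U * U⁻¹ = 1 := by rw [hUinv]; exact hUmem.2
  have hreidx : ∀ g : G, (Matrix.reindex (finCongr hmeq) (finCongr hmeq) (σm g))
      = U * (π α g : Matrix (Fin (d α)) (Fin (d α)) ℂ) * U⁻¹ := by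
    intro g
    have h1 := hUeq g
    rw [hσcoe] at h1
    calc Matrix.reindex (finCongr hmeq) (finCongr hmeq) (σm g)
        = (U * U⁻¹) * Matrix.reindex (finCongr hmeq) (finCongr hmeq) (σm g) * (U * U⁻¹) := by
          rw [hUr, Matrix.one_mul, Matrix.mul_one]
      _ = U * (U⁻¹ * Matrix.reindex (finCongr hmeq) (finCongr hmeq) (σm g) * U) * U⁻¹ := by
          simp only [Matrix.mul_assoc]
      _ = U * (π α g : Matrix (Fin (d α)) (Fin (d α)) ℂ) * U⁻¹ := by rw [h1]
  have hσcoeff : ∀ k j : Fin m, toE (fun g => σm g k j) ∈ V := by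
    intro k j
    have hentry : ∀ g : G, σm g k j
        = ∑ q : Fin (d α), ∑ p : Fin (d α),
            (U (finCongr hmeq k) p * U⁻¹ q (finCongr hmeq j)) * coeff (π α) q p g := by
      intro g
      have h1 := congrFun (congrFun (hreidx g) (finCongr hmeq k)) (finCongr hmeq j)
      have h2 : (Matrix.reindex (finCongr hmeq) (finCongr hmeq) (σm g))
          (finCongr hmeq k) (finCongr hmeq j) = σm g k j := by
        rw [Matrix.reindex_apply, Matrix.submatrix_apply]
        congr 1 <;> simp
      rw [h2] at h1
      rw [h1, Matrix.mul_apply]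
      apply Finset.sum_congr rfl
      intro q _
      rw [Matrix.mul_apply, Finset.sum_mul]
      apply Finset.sum_congr rfl
      intro p _
      show U ((finCongr hmeq) k) p * (π α g : Matrix (Fin (d α)) (Fin (d α)) ℂ) p q *
          U⁻¹ q ((finCongr hmeq) j)
        = U ((finCongr hmeq) k) p * U⁻¹ q ((finCongr hmeq) j) *
          (π α g : Matrix (Fin (d α)) (Fin (d α)) ℂ) p q
      ring
    have hfun : (fun g => σm g k j)
        = ∑ q : Fin (d α), ∑ p : Fin (d α),
            (U (finCongr hmeq k) p * U⁻¹ q (finCongr hmeq j)) • coeff (π α) q p := by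
      funext g
      rw [hentry g, Finset.sum_apply]
      apply Finset.sum_congr rfl
      intro q _
      rw [Finset.sum_apply]
      apply Finset.sum_congr rfl
      intro p _
      rw [Pi.smul_apply, smul_eq_mul]
    rw [hfun, map_sum]
    apply Submodule.sum_mem
    intro q _
    rw [map_sum]
    apply Submodule.sum_mem
    intro p _
    rw [map_smul]
    exact Submodule.smul_mem _ _ (Submodule.subset_span ⟨⟨α, q, p⟩, rfl⟩)
  -- each basis vector of W lies in V
  set F : ↥W →ₗ[ℂ] (G → ℂ) := toE.symm.toLinearMap ∘ₗ W.subtype with hF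
  have hFtr : ∀ (h : G) (x : ↥W), trL h (F x) = F (Rres h x) := by
    intro h x
    show trL h (toE.symm ↑x) = toE.symm ↑(Rres h x)
    rw [hRres_coe]
    show _ = toE.symm (RlinE h ↑x)
    simp [RlinE]
  have hsum : ∀ (h : G) (j : Fin m), Rres h (b j) = ∑ k, σm h k j • b k := by
    intro h j
    conv_lhs => rw [← b.toBasis.sum_repr (Rres h (b j))]
    apply Finset.sum_congr rfl
    intro k _
    congr 1
    · show (b.toBasis.repr ((Rres h) (b j))) k
          = (LinearMap.toMatrix b.toBasis b.toBasis) (Rres h) k j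
      rw [LinearMap.toMatrix_apply, OrthonormalBasis.coe_toBasis]
  have hval : ∀ (j : Fin m) (h : G), F (b j) h = ∑ k, σm h k j * (F (b k) 1) := by
    intro j h
    have h1 : F (b j) h = (trL h (F (b j))) 1 := by
      show F (b j) h = F (b j) (1 * h)
      rw [one_mul]
    rw [h1, hFtr, hsum, map_sum, Finset.sum_apply]
    apply Finset.sum_congr rfl
    intro k _
    rw [map_smul, Pi.smul_apply, smul_eq_mul]
  have hbj : ∀ j : Fin m, (↑(b j) : EuclideanSpace ℂ G) ∈ V := by
    intro j
    have h1 : (↑(b j) : EuclideanSpace ℂ G) = toE (F (b j)) := by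
      show _ = toE (toE.symm (b j : EuclideanSpace ℂ G))
      rw [LinearEquiv.apply_symm_apply]
    have h2 : F (b j) = ∑ k, (F (b k) 1) • (fun h => σm h k j) := by
      funext h
      rw [hval j h, Finset.sum_apply]
      apply Finset.sum_congr rfl
      intro k _
      rw [Pi.smul_apply, smul_eq_mul]
      ring
    rw [h1, h2, map_sum]
    apply Submodule.sum_mem
    intro k _
    rw [map_smul]
    exact Submodule.smul_mem _ _ (hσcoeff k j)
  -- contradiction
  set j₀ : Fin m := ⟨0, hmpos⟩ with hj₀
  have hmem : (↑(b j₀) : EuclideanSpace ℂ G) ∈ V := hbj j₀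
  have hmemperp : (↑(b j₀) : EuclideanSpace ℂ G) ∈ Vᗮ := hWle (b j₀).2
  have hzero : (↑(b j₀) : EuclideanSpace ℂ G) = 0 := by
    rw [Submodule.mem_orthogonal] at hmemperp
    exact inner_self_eq_zero.mp (hmemperp _ hmem)
  have : b j₀ = 0 := by
    apply Subtype.ext
    simpa using hzero
  have hn1 : ‖b j₀‖ = 1 := b.orthonormal.1 j₀
  rw [this] at hn1
  simp at hn1

end Complete

section Parseval
variable {G : Type*} [Group G] [Fintype G] [DecidableEq G]
variable {A : Type*} [Fintype A] {d : A → ℕ}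

lemma parseval_coeff (π : ∀ α : A, URep G (d α))
    (hirr : ∀ α, URepIrreducible (π α))
    (hpair : ∀ α β, α ≠ β → ¬ UEquiv (π α) (π β))
    (hcomplete : ∀ (d' : ℕ) (σ : URep G d'), URepIrreducible σ → ∃ α, UEquiv σ (π α))
    (f : G → ℂ) :
    ∑ p : Σ α : A, Fin (d α) × Fin (d α),
      ((d p.1 : ℝ) / (Fintype.card G : ℝ)) *
        Complex.normSq (dotC f (coeff (π p.1) p.2.1 p.2.2)) = norm2 f := by
  classical
  set fam : (Σ α : A, Fin (d α) × Fin (d α)) → EuclideanSpace ℂ G :=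
    fun p => toE (coeff (π p.1) p.2.1 p.2.2) with hfam
  set s : (Σ α : A, Fin (d α) × Fin (d α)) → ℝ :=
    fun p => Real.sqrt ((d p.1 : ℝ) / (Fintype.card G : ℝ)) with hs
  set enorm : (Σ α : A, Fin (d α) × Fin (d α)) → EuclideanSpace ℂ G :=
    fun p => ((s p : ℝ) : ℂ) • fam p with henorm
  have hN : (0:ℝ) < (Fintype.card G : ℝ) := by exact_mod_cast Fintype.card_pos
  have hsp : ∀ p, 0 < s p := fun p =>
    Real.sqrt_pos.mpr (div_pos (by exact_mod_cast (hirr p.1).1) hN)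
  have hss : ∀ p, s p * s p = (d p.1 : ℝ) / (Fintype.card G : ℝ) := fun p =>
    Real.mul_self_sqrt (le_of_lt (div_pos (by exact_mod_cast (hirr p.1).1) hN))
  -- inner products of the raw family
  have hinner : ∀ p q : Σ α : A, Fin (d α) × Fin (d α),
      (inner ℂ (fam p) (fam q))
        = ∑ g : G, (π q.1 g : Matrix (Fin (d q.1)) (Fin (d q.1)) ℂ) q.2.2 q.2.1 *
            (starRingEnd ℂ) ((π p.1 g : Matrix (Fin (d p.1)) (Fin (d p.1)) ℂ) p.2.2 p.2.1) := by
    intro p q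
    rw [hfam]
    rw [inner_toE]
    unfold dotC coeff
    rfl
  have honb : Orthonormal ℂ enorm := by
    rw [orthonormal_iff_ite]
    rintro ⟨α, k, i⟩ ⟨β, l, j⟩
    rw [henorm]
    simp only
    rw [inner_smul_left, inner_smul_right, Complex.conj_ofReal]
    by_cases hab : α = β
    · subst hab
      rw [hinner ⟨α, k, i⟩ ⟨α, l, j⟩]
      have := orth_same (π α) (hirr α) j l i k
      rw [this]
      by_cases h2 : l = k ∧ j = i
      · obtain ⟨rfl, rfl⟩ := h2
        rw [if_pos ⟨rfl, rfl⟩, if_pos rfl]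
        have hd0 : ((d α : ℝ)) ≠ 0 := by
          exact_mod_cast (hirr α).1.ne'
        have : ((s ⟨α, l, j⟩ : ℝ) : ℂ) * (((s ⟨α, l, j⟩ : ℝ) : ℂ) *
            ((Fintype.card G : ℂ) / (d α : ℂ))) =
            (((s ⟨α, l, j⟩ * s ⟨α, l, j⟩ : ℝ)) : ℂ) * ((Fintype.card G : ℂ) / (d α : ℂ)) := by
          push_cast; ring
        rw [this, hss ⟨α, l, j⟩]
        have hdC : ((d α : ℂ)) ≠ 0 := by exact_mod_cast (hirr α).1.ne'
        have hNC : ((Fintype.card G : ℂ)) ≠ 0 := by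
          exact_mod_cast (Fintype.card_pos (α := G)).ne'
        push_cast
        field_simp
      · rw [if_neg h2, if_neg (by
          simp only [Sigma.mk.inj_iff, heq_eq_eq, Prod.mk.injEq]
          rintro ⟨-, rfl, rfl⟩
          exact h2 ⟨rfl, rfl⟩)]
        ring
    · rw [hinner ⟨α, k, i⟩ ⟨β, l, j⟩]
      have := orth_cross (π β) (π α) (hirr β) (hirr α)
        (hpair β α (Ne.symm hab)) j l i k
      rw [this, if_neg (by
        simp only [Sigma.mk.inj_iff]
        rintro ⟨h, -⟩
        exact hab h)]
      ring
  have hspan : Submodule.span ℂ (Set.range enorm) = ⊤ := by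
    have h1 := coeff_span_top π hirr hcomplete
    apply le_antisymm le_top
    rw [← h1]
    apply Submodule.span_le.mpr
    rintro x ⟨p, rfl⟩
    show fam p ∈ _
    have : fam p = (((s p)⁻¹ : ℝ) : ℂ) • enorm p := by
      rw [henorm]
      simp only
      rw [smul_smul]
      have : ((((s p)⁻¹ : ℝ)) : ℂ) * ((s p : ℝ) : ℂ) = 1 := by
        rw [← Complex.ofReal_mul, inv_mul_cancel₀ (hsp p).ne', Complex.ofReal_one]
      rw [this, one_smul]
    rw [this]
    exact Submodule.smul_mem _ _ (Submodule.subset_span ⟨p, rfl⟩)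
  set B : OrthonormalBasis (Σ α : A, Fin (d α) × Fin (d α)) ℂ (EuclideanSpace ℂ G) :=
    OrthonormalBasis.mk honb (le_of_eq hspan.symm) with hB
  have hB_repr : ∀ p, B.repr (toE f) p = ((s p : ℝ) : ℂ) * dotC f (coeff (π p.1) p.2.1 p.2.2) := by
    intro p
    rw [OrthonormalBasis.repr_apply_apply]
    have : B p = enorm p := by rw [hB]; exact congrFun (OrthonormalBasis.coe_mk honb _) p
    rw [this, henorm]
    simp only
    rw [inner_smul_left, Complex.conj_ofReal, hfam]
    simp only
    rw [inner_toE]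
  have hnorm : ‖toE f‖ ^ 2 = ∑ p, ‖B.repr (toE f) p‖ ^ 2 := by
    rw [← B.repr.norm_map (toE f), EuclideanSpace.norm_eq,
      Real.sq_sqrt (Finset.sum_nonneg fun x _ => sq_nonneg _)]
  have hterm : ∀ p, ‖B.repr (toE f) p‖ ^ 2
      = ((d p.1 : ℝ) / (Fintype.card G : ℝ)) *
          Complex.normSq (dotC f (coeff (π p.1) p.2.1 p.2.2)) := by
    intro p
    rw [hB_repr p, norm_mul, mul_pow]
    congr 1
    · rw [Complex.norm_real, Real.norm_eq_abs, abs_of_pos (hsp p), sq, hss p]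
    · rw [Complex.sq_norm]
  rw [← norm_toE, hnorm]
  apply Finset.sum_congr rfl
  intro p _
  exact (hterm p).symm

end Parseval

section Spectral

lemma dotC_smul_left {X : Type*} [Fintype X] (c : ℂ) (x z : X → ℂ) :
    dotC (c • x) z = c * dotC x z := by
  unfold dotC
  rw [Finset.mul_sum]
  apply Finset.sum_congr rfl
  intro i _
  rw [Pi.smul_apply, smul_eq_mul]
  ring

lemma dotC_smul_right {X : Type*} [Fintype X] (c : ℂ) (x z : X → ℂ) :
    dotC x (c • z) = (starRingEnd ℂ) c * dotC x z := by
  unfold dotC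
  rw [Finset.mul_sum]
  apply Finset.sum_congr rfl
  intro i _
  rw [Pi.smul_apply, smul_eq_mul, map_mul]
  ring

lemma dotC_sum_left {X κ : Type*} [Fintype X] (s : Finset κ) (x : κ → X → ℂ) (z : X → ℂ) :
    dotC (∑ i ∈ s, x i) z = ∑ i ∈ s, dotC (x i) z := by
  unfold dotC
  rw [Finset.sum_comm]
  apply Finset.sum_congr rfl
  intro g _
  rw [Finset.sum_apply, Finset.sum_mul]

lemma dotC_sum_right {X κ : Type*} [Fintype X] (s : Finset κ) (x : X → ℂ) (z : κ → X → ℂ) :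
    dotC x (∑ i ∈ s, z i) = ∑ i ∈ s, dotC x (z i) := by
  unfold dotC
  rw [Finset.sum_comm]
  apply Finset.sum_congr rfl
  intro g _
  rw [Finset.sum_apply, map_sum, Finset.mul_sum]

lemma dotC_self {X : Type*} [Fintype X] (u : X → ℂ) : dotC u u = ((norm2 u : ℝ) : ℂ) := by
  unfold dotC norm2
  push_cast
  apply Finset.sum_congr rfl
  intro x _
  rw [Complex.mul_conj]

lemma dotC_mulVec_comm {dd : ℕ} {M : Matrix (Fin dd) (Fin dd) ℂ} (hH : M.IsHermitian)
    (x y : Fin dd → ℂ) : dotC (M.mulVec x) y = dotC x (M.mulVec y) := by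
  unfold dotC
  have hconj : ∀ k l, (starRingEnd ℂ) (M l k) = M k l := by
    intro k l
    have := congrFun (congrFun hH.eq k) l
    rw [← this]
    rfl
  calc ∑ k, M.mulVec x k * (starRingEnd ℂ) (y k)
      = ∑ k, ∑ l, M k l * x l * (starRingEnd ℂ) (y k) := by
        apply Finset.sum_congr rfl
        intro k _
        rw [Matrix.mulVec, dotProduct, Finset.sum_mul]
    _ = ∑ l, ∑ k, M k l * x l * (starRingEnd ℂ) (y k) := Finset.sum_comm
    _ = ∑ l, x l * (starRingEnd ℂ) (M.mulVec y l) := by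
        apply Finset.sum_congr rfl
        intro l _
        rw [Matrix.mulVec, dotProduct, map_sum, Finset.mul_sum]
        apply Finset.sum_congr rfl
        intro k _
        rw [map_mul, hconj k l]
        ring

lemma eig_orth {dd : ℕ} {M : Matrix (Fin dd) (Fin dd) ℂ} (hH : M.IsHermitian)
    {lam mu : ℝ} {x y : Fin dd → ℂ} (hx : IsEigvec M lam x) (hy : IsEigvec M mu y)
    (hne : lam ≠ mu) : dotC x y = 0 := by
  have h1 : dotC (M.mulVec x) y = (lam : ℂ) * dotC x y := by
    rw [hx, dotC_smul_left]
  have h2 : dotC x (M.mulVec y) = (mu : ℂ) * dotC x y := by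
    rw [hy, dotC_smul_right, Complex.conj_ofReal]
  have h3 := dotC_mulVec_comm hH x y
  rw [h1, h2] at h3
  by_contra h0
  exact hne (by exact_mod_cast mul_right_cancel₀ h0 h3)

lemma spectral_frames {dd : ℕ} (M : Matrix (Fin dd) (Fin dd) ℂ) (hH : M.IsHermitian)
    (Λ : Finset ℝ) (hΛ : ∀ lam : ℝ, lam ∈ Λ ↔ IsEigval M lam)
    {ι : ℝ → Type*} [∀ lam, Fintype (ι lam)]
    (F : (lam : ℝ) → ι lam → (Fin dd → ℂ)) (C : ℝ)
    (hmem : ∀ lam ∈ Λ, ∀ t, IsEigvec M lam (F lam t))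
    (htight : ∀ lam ∈ Λ, ∀ v : Fin dd → ℂ, IsEigvec M lam v →
      ∑ t, Complex.normSq (dotC v (F lam t)) = C * norm2 v)
    (v : Fin dd → ℂ) :
    ∑ lam ∈ Λ, ∑ t, Complex.normSq (dotC v (F lam t)) = C * norm2 v := by
  classical
  set b := hH.eigenvectorBasis with hb
  set eig := hH.eigenvalues with heig
  set Bfun : Fin dd → (Fin dd → ℂ) := fun j => toE.symm (b j) with hBfun
  have hBeig : ∀ j, IsEigvec M (eig j) (Bfun j) := by
    intro j
    have h1 := hH.mulVec_eigenvectorBasis j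
    unfold IsEigvec
    funext i
    have h2 := congrFun h1 i
    rw [hBfun]
    show M.mulVec (toE.symm (b j)) i = ((eig j : ℝ) : ℂ) • (toE.symm (b j)) i
    have h3 : WithLp.ofLp (b j) = toE.symm (b j) := rfl
    rw [h3] at h2
    rw [h2]
    rw [Pi.smul_apply, Complex.real_smul, smul_eq_mul]
  have hBne : ∀ j, Bfun j ≠ 0 := by
    intro j hj
    have : b j = 0 := by
      have := congrArg toE hj
      rw [hBfun] at this
      simpa using this
    have hn := hH.eigenvectorBasis.orthonormal.1 j
    rw [hb] at this
    rw [this] at hn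
    simp at hn
  have heigmem : ∀ j, eig j ∈ Λ := fun j => (hΛ (eig j)).mpr ⟨Bfun j, hBne j, hBeig j⟩
  set c : Fin dd → ℂ := fun j => dotC v (Bfun j) with hc
  have hBon : ∀ i j, dotC (Bfun i) (Bfun j) = if j = i then 1 else 0 := by
    intro i j
    have h1 : (inner ℂ (toE (Bfun j)) (toE (Bfun i))) = dotC (Bfun i) (Bfun j) :=
      inner_toE _ _
    rw [← h1]
    have h2 : toE (Bfun j) = b j := by rw [hBfun]; simp
    have h3 : toE (Bfun i) = b i := by rw [hBfun]; simp
    rw [h2, h3]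
    exact orthonormal_iff_ite.mp b.orthonormal j i
  have hdecomp : v = ∑ j, c j • Bfun j := by
    have h1 := b.sum_repr (toE v)
    have h2 : ∀ j, b.repr (toE v) j = c j := by
      intro j
      rw [OrthonormalBasis.repr_apply_apply, hc]
      simp only
      have : b j = toE (Bfun j) := by rw [hBfun]; simp
      rw [this, inner_toE]
    have h3 := congrArg toE.symm h1
    rw [map_sum, LinearEquiv.symm_apply_apply] at h3
    rw [← h3]
    apply Finset.sum_congr rfl
    intro j _
    rw [map_smul, h2 j]
  set vl : ℝ → (Fin dd → ℂ) :=
    fun lam => ∑ j ∈ Finset.univ.filter (fun j => eig j = lam), c j • Bfun j with hvl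
  have h_eig_vl : ∀ lam : ℝ, IsEigvec M lam (vl lam) := by
    intro lam
    unfold IsEigvec
    rw [hvl]
    simp only
    rw [← Matrix.mulVecLin_apply, map_sum, Finset.smul_sum]
    apply Finset.sum_congr rfl
    intro j hj
    rw [Finset.mem_filter] at hj
    rw [map_smul, Matrix.mulVecLin_apply, hBeig j, hj.2]
    rw [smul_comm]
  have hproj : ∀ lam ∈ Λ, ∀ t : ι lam, dotC v (F lam t) = dotC (vl lam) (F lam t) := by
    intro lam hlam t
    conv_lhs => rw [hdecomp]
    rw [dotC_sum_left]
    rw [← Finset.sum_filter_add_sum_filter_not Finset.univ (fun j => eig j = lam)]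
    have hz : ∑ j ∈ Finset.univ.filter (fun j => ¬ eig j = lam),
        dotC (c j • Bfun j) (F lam t) = 0 := by
      apply Finset.sum_eq_zero
      intro j hj
      rw [Finset.mem_filter] at hj
      rw [dotC_smul_left, eig_orth hH (hBeig j) (hmem lam hlam t) hj.2, mul_zero]
    rw [hz, add_zero, hvl]
    rw [dotC_sum_left]
  have hns : ∀ s : Finset (Fin dd), norm2 (∑ j ∈ s, c j • Bfun j)
      = ∑ j ∈ s, Complex.normSq (c j) := by
    intro s
    apply Complex.ofReal_injective
    rw [← dotC_self, dotC_sum_left]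
    have h4 : ∀ j ∈ s, dotC (c j • Bfun j) (∑ k ∈ s, c k • Bfun k)
        = ((Complex.normSq (c j) : ℝ) : ℂ) := by
      intro j hj
      rw [dotC_smul_left, dotC_sum_right]
      have h2 : ∀ k ∈ s, dotC (Bfun j) (c k • Bfun k)
          = if k = j then (starRingEnd ℂ) (c j) else 0 := by
        intro k _
        rw [dotC_smul_right, hBon j k]
        by_cases hkj : k = j
        · subst hkj; simp
        · simp [hkj]
      rw [Finset.sum_congr rfl h2, Finset.sum_ite_eq' s j]
      rw [if_pos hj, Complex.mul_conj]
    rw [Finset.sum_congr rfl h4]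
    push_cast
    rfl
  have hnorm_vl : ∀ lam : ℝ, norm2 (vl lam)
      = ∑ j ∈ Finset.univ.filter (fun j => eig j = lam), Complex.normSq (c j) := by
    intro lam
    rw [hvl]
    exact hns _
  have hnorm_v : norm2 v = ∑ j, Complex.normSq (c j) := by
    conv_lhs => rw [hdecomp]
    exact hns Finset.univ
  calc ∑ lam ∈ Λ, ∑ t, Complex.normSq (dotC v (F lam t))
      = ∑ lam ∈ Λ, ∑ t, Complex.normSq (dotC (vl lam) (F lam t)) := by
        apply Finset.sum_congr rfl
        intro lam hlam
        apply Finset.sum_congr rfl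
        intro t _
        rw [hproj lam hlam t]
    _ = ∑ lam ∈ Λ, C * norm2 (vl lam) := by
        apply Finset.sum_congr rfl
        intro lam hlam
        exact htight lam hlam (vl lam) (h_eig_vl lam)
    _ = C * ∑ lam ∈ Λ, norm2 (vl lam) := (Finset.mul_sum _ _ _).symm
    _ = C * norm2 v := by
        congr 1
        rw [hnorm_v]
        have hfib := Finset.sum_fiberwise_of_maps_to (s := Finset.univ) (t := Λ) (g := eig)
          (fun j _ => heigmem j) (fun j => Complex.normSq (c j))
        rw [← hfib]
        apply Finset.sum_congr rfl
        intro lam _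
        exact hnorm_vl lam

end Spectral

/-- If each `F^{α,λ}_i` is a tight frame for `E_λ(π^α(S))` with frame constant
`C`, then `Φ = {Θ̃_{π^α,i,λ}(ψ)}` is a tight frame for `L²(𝕊_n)` with frame constant `C`:
`∑_{φ ∈ Φ} |⟨f, φ⟩|² = C‖f‖²` for all `f ∈ L²(𝕊_n)`. -/
theorem stmt17 {n : ℕ} (hn : 1 ≤ n) (S : Finset (Equiv.Perm (Fin n)))
    (hS : ∀ s ∈ S, s⁻¹ ∈ S) {A : Type*} [Fintype A] {d : A → ℕ}
    (π : ∀ α : A, URep (Equiv.Perm (Fin n)) (d α))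
    (hirr : ∀ α, URepIrreducible (π α))
    (hpair : ∀ α β, α ≠ β → ¬ UEquiv (π α) (π β))
    (hcomplete : ∀ (d' : ℕ) (σ : URep (Equiv.Perm (Fin n)) d'),
        URepIrreducible σ → ∃ α, UEquiv σ (π α))
    (Λ : A → Finset ℝ) (hΛ : ∀ α (lam : ℝ), lam ∈ Λ α ↔ IsEigval (repSum (π α) S) lam)
    (C : ℝ) (hC : 0 < C)
    {ι : (α : A) → Fin (d α) → ℝ → Type*} [∀ α i lam, Fintype (ι α i lam)]
    (F : (α : A) → (i : Fin (d α)) → (lam : ℝ) → ι α i lam → (Fin (d α) → ℂ))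
    (hmem : ∀ α (i : Fin (d α)) (lam : ℝ), lam ∈ Λ α →
        ∀ t, IsEigvec (repSum (π α) S) lam (F α i lam t))
    (htight : ∀ α (i : Fin (d α)) (lam : ℝ), lam ∈ Λ α →
        ∀ v : Fin (d α) → ℂ, IsEigvec (repSum (π α) S) lam v →
          ∑ t, Complex.normSq (dotC v (F α i lam t)) = C * norm2 v) :
    ∀ f : Equiv.Perm (Fin n) → ℂ,
      ∑ p : Σ α : A, Σ i : Fin (d α), Σ lam : (Λ α), ι α i (lam : ℝ),
        Complex.normSq (dotC f (ThetaT n (π p.1) p.2.1 (F p.1 p.2.1 (p.2.2.1 : ℝ) p.2.2.2)))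
        = C * norm2 f := by
  classical
  intro f
  have hN : (Fintype.card (Equiv.Perm (Fin n)) : ℝ) = (n.factorial : ℝ) := by
    rw [Fintype.card_perm, Fintype.card_fin]
  have hNpos : (0:ℝ) < (n.factorial : ℝ) := by exact_mod_cast n.factorial_pos
  -- π(S) is Hermitian
  have hherm : ∀ α, (repSum (π α) S).IsHermitian := by
    intro α
    show (repSum (π α) S).conjTranspose = repSum (π α) S
    unfold repSum
    rw [Matrix.conjTranspose_sum]
    refine Finset.sum_bij' (fun a _ => a⁻¹) (fun a _ => a⁻¹)
      (fun a ha => hS a ha) (fun a ha => hS a ha)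
      (fun a _ => inv_inv a) (fun a _ => inv_inv a) ?_
    intro a _
    rw [← Matrix.star_eq_conjTranspose, ← urep_inv_coe]
  -- the coefficient vector of f
  set sc : A → ℝ := fun α => Real.sqrt ((d α : ℝ) / (n.factorial : ℝ)) with hsc
  set vv : (α : A) → Fin (d α) → Fin (d α) → ℂ :=
    fun α i k => ((sc α : ℝ) : ℂ) * dotC f (coeff (π α) k i) with hvv
  have hdot : ∀ (α : A) (i : Fin (d α)) (ψ : Fin (d α) → ℂ),
      dotC f (ThetaT n (π α) i ψ) = dotC (vv α i) ψ := by
    intro α i ψ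
    unfold dotC ThetaT Theta
    calc ∑ g, f g * (starRingEnd ℂ) (((Real.sqrt ((d α : ℝ) / (n.factorial : ℝ))) : ℂ)
          * ∑ k, ψ k * coeff (π α) k i g)
        = ∑ g, ∑ k, (((sc α : ℝ) : ℂ) * (f g * (starRingEnd ℂ) (coeff (π α) k i g)))
            * (starRingEnd ℂ) (ψ k) := by
          apply Finset.sum_congr rfl
          intro g _
          rw [map_mul, Complex.conj_ofReal, map_sum, Finset.mul_sum, Finset.mul_sum]
          apply Finset.sum_congr rfl
          intro k _
          rw [map_mul, hsc]
          ring
      _ = ∑ k, ∑ g, (((sc α : ℝ) : ℂ) * (f g * (starRingEnd ℂ) (coeff (π α) k i g)))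
            * (starRingEnd ℂ) (ψ k) := Finset.sum_comm
      _ = ∑ k, vv α i k * (starRingEnd ℂ) (ψ k) := by
          apply Finset.sum_congr rfl
          intro k _
          rw [hvv]
          simp only
          unfold dotC
          rw [Finset.mul_sum, Finset.sum_mul]
  -- the spectral identity for each (α, i)
  have hspec : ∀ (α : A) (i : Fin (d α)),
      ∑ lam ∈ Λ α, ∑ t : ι α i lam, Complex.normSq (dotC (vv α i) (F α i lam t))
        = C * norm2 (vv α i) := fun α i =>
    spectral_frames _ (hherm α) (Λ α) (hΛ α) (F α i) C (hmem α i) (htight α i) (vv α i)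
  -- Parseval
  have hpars := parseval_coeff π hirr hpair hcomplete f
  -- split the sigma sum
  rw [← Finset.univ_sigma_univ, Finset.sum_sigma]
  have hmain : ∀ α : A, ∑ q : Σ i : Fin (d α), Σ lam : (Λ α), ι α i (lam : ℝ),
      Complex.normSq (dotC f (ThetaT n (π α) q.1 (F α q.1 (q.2.1 : ℝ) q.2.2)))
      = ∑ i : Fin (d α), C * norm2 (vv α i) := by
    intro α
    rw [← Finset.univ_sigma_univ, Finset.sum_sigma]
    apply Finset.sum_congr rfl
    intro i _
    rw [← Finset.univ_sigma_univ, Finset.sum_sigma]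
    have h1 : ∑ lam : (Λ α), ∑ t : ι α i (lam : ℝ),
        Complex.normSq (dotC f (ThetaT n (π α) i (F α i (lam : ℝ) t)))
        = ∑ lam ∈ Λ α, ∑ t : ι α i lam,
            Complex.normSq (dotC f (ThetaT n (π α) i (F α i lam t))) :=
      Finset.sum_coe_sort (Λ α) (fun lam => ∑ t : ι α i lam,
        Complex.normSq (dotC f (ThetaT n (π α) i (F α i lam t))))
    rw [h1]
    rw [← hspec α i]
    apply Finset.sum_congr rfl
    intro lam _
    apply Finset.sum_congr rfl
    intro t _
    rw [hdot α i (F α i lam t)]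
  rw [Finset.sum_congr rfl (fun α _ => hmain α)]
  -- combine with Parseval
  have hfinal : ∑ α : A, ∑ i : Fin (d α), C * norm2 (vv α i) = C * norm2 f := by
    have hnvv : ∀ (α : A) (i : Fin (d α)), norm2 (vv α i)
        = ∑ k : Fin (d α), ((d α : ℝ) / (Fintype.card (Equiv.Perm (Fin n)) : ℝ)) *
            Complex.normSq (dotC f (coeff (π α) k i)) := by
      intro α i
      unfold norm2
      apply Finset.sum_congr rfl
      intro k _
      rw [hvv]
      simp only
      rw [Complex.normSq_mul, Complex.normSq_ofReal, hsc]
      simp only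
      rw [Real.mul_self_sqrt (le_of_lt (div_pos (by exact_mod_cast (hirr α).1) hNpos)), hN]
    calc ∑ α : A, ∑ i : Fin (d α), C * norm2 (vv α i)
        = C * ∑ α : A, ∑ i : Fin (d α), norm2 (vv α i) := by
          rw [Finset.mul_sum]
          apply Finset.sum_congr rfl
          intro α _
          rw [Finset.mul_sum]
      _ = C * norm2 f := by
          congr 1
          rw [← hpars, ← Finset.univ_sigma_univ, Finset.sum_sigma]
          apply Finset.sum_congr rfl
          intro α _
          rw [Fintype.sum_prod_type]
          rw [Finset.sum_comm]
          apply Finset.sum_congr rfl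
          intro i _
          rw [hnvv α i]
  exact hfinal
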